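/- Every traceless 2×2 complex matrix is a sum of three matrices each of whose square is zero. -/

import Mathlib

/-- Every traceless 2×2 complex matrix is a sum of three matrices each of whose
square is zero. -/
theorem stmt_8 (M : Matrix (Fin 2) (Fin 2) ℂ) (h : Matrix.trace M = 0) :
    ∃ A B C : Matrix (Fin 2) (Fin 2) ℂ,
      A * A = 0 ∧ B * B = 0 ∧ C * C = 0 ∧ M = A + B + C := by
  set a : ℂ := M 0 0 with ha
  have h11 : M 1 1 = -a := by
    have := h
    simp [Matrix.trace, Matrix.diag, Fin.sum_univ_two] at this
    linear_combination this
  refine ⟨!![a, Complex.I * a; Complex.I * a, -a],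
          !![0, M 0 1 - Complex.I * a; 0, 0],
          !![0, 0; M 1 0 - Complex.I * a, 0], ?_, ?_, ?_, ?_⟩ <;>
    ext i j <;> fin_cases i <;> fin_cases j <;>
      simp [Matrix.mul_apply, Fin.sum_univ_two, h11, ← ha] <;> ring_nf <;>
      simp [Complex.I_sq] <;> ring
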